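/- arXiv:2101.08902 — 7 statements merged into one kernel-verified Lean document; each statement's English description precedes it below -/
import Mathlib

section
/- Let G = ℤ² ⋊_A ℤ where A ∈ SL₂(ℤ) acts on ℤ² by the generator t of ℤ, i.e., t·v·t⁻¹ = Av for v ∈ ℤ². If |tr(A)| > 2, then any length function l : G → [0,∞) vanishes on the subgroup ℤ². -/
/-- In the semidirect product `ℤ² ⋊_A ℤ` with `A ∈ SL₂(ℤ)` and `|tr A| > 2`, any
length function vanishes on the subgroup `ℤ²`.  The semidirect product is encoded
by an injective additive-to-multiplicative map `ι : ℤ² → G` and an element `t`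
(the generator of `ℤ`) with `t * ι v * t⁻¹ = ι (A v)`. -/
theorem length_function_vanishes_on_Z2_of_trace_gt_two
    {G : Type*} [Group G] (A : Matrix.SpecialLinearGroup (Fin 2) ℤ)
    (htr : 2 < |Matrix.trace (A : Matrix (Fin 2) (Fin 2) ℤ)|)
    (ι : (Fin 2 → ℤ) → G) (hι : ∀ v w : Fin 2 → ℤ, ι (v + w) = ι v * ι w)
    (hinj : Function.Injective ι)
    (t : G) (ht : ∀ v : Fin 2 → ℤ, t * ι v * t⁻¹ = ι ((A : Matrix (Fin 2) (Fin 2) ℤ).mulVec v))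
    (l : G → ℝ)
    (hnonneg : ∀ g : G, 0 ≤ l g)
    (hpow : ∀ (g : G) (n : ℤ), l (g ^ n) = |(n : ℝ)| * l g)
    (hconj : ∀ a g : G, l (a * g * a⁻¹) = l g)
    (hcomm : ∀ a b : G, a * b = b * a → l (a * b) ≤ l a + l b) :
    ∀ v : Fin 2 → ℤ, l (ι v) = 0 := by
  intro v
  set M : Matrix (Fin 2) (Fin 2) ℤ := (A : Matrix (Fin 2) (Fin 2) ℤ) with hM
  set N : Matrix (Fin 2) (Fin 2) ℤ := ((A⁻¹ : Matrix.SpecialLinearGroup (Fin 2) ℤ) :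
    Matrix (Fin 2) (Fin 2) ℤ) with hN
  set c : ℤ := Matrix.trace M with hc
  -- ι as a homomorphism into Additive G
  let f : (Fin 2 → ℤ) →+ Additive G :=
    AddMonoidHom.mk' (fun w => Additive.ofMul (ι w)) (by intro a b; exact congrArg _ (hι a b))
  have hzsmul : ∀ (w : Fin 2 → ℤ) (n : ℤ), ι (n • w) = ι w ^ n := by
    intro w n
    have := map_zsmul f n w
    exact Additive.ofMul.injective (by simpa [f] using this)
  -- A-invariance of l ∘ ι
  have hAinv : ∀ w : Fin 2 → ℤ, l (ι (M.mulVec w)) = l (ι w) := by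
    intro w
    rw [← ht w, hconj]
  have hAinv' : ∀ w : Fin 2 → ℤ, l (ι (N.mulVec w)) = l (ι w) := by
    intro w
    have h1 := hAinv (N.mulVec w)
    have h2 : M.mulVec (N.mulVec w) = w := by
      rw [Matrix.mulVec_mulVec]
      have : M * N = 1 := by
        rw [hM, hN, ← Matrix.SpecialLinearGroup.coe_mul, mul_inv_cancel]
        simp
      rw [this, Matrix.one_mulVec]
    rw [h2] at h1
    exact h1.symm
  -- Cayley–Hamilton: M v + N v = c • v
  have hCH : M.mulVec v + N.mulVec v = c • v := by
    have hNadj : N = M.adjugate := by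
      rw [hN, Matrix.SpecialLinearGroup.coe_inv]
    have hMN : M + N = c • (1 : Matrix (Fin 2) (Fin 2) ℤ) := by
      rw [hNadj]
      ext i j
      fin_cases i <;> fin_cases j <;>
        simp [Matrix.adjugate_fin_two, Matrix.trace_fin_two, Matrix.one_apply, hc] <;> ring
    have := congrArg (fun P => Matrix.mulVec P v) hMN
    simpa [Matrix.add_mulVec, Matrix.smul_mulVec, Matrix.one_mulVec] using this
  -- commutation of images of ι
  have hcommι : ∀ a b : Fin 2 → ℤ, ι a * ι b = ι b * ι a := by
    intro a b
    rw [← hι, ← hι, add_comm]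
  -- main inequality
  have key : |(c : ℝ)| * l (ι v) ≤ 2 * l (ι v) := by
    have h1 : l (ι (c • v)) = |(c : ℝ)| * l (ι v) := by
      rw [hzsmul, hpow]
    have h2 : l (ι (c • v)) ≤ l (ι (M.mulVec v)) + l (ι (N.mulVec v)) := by
      rw [← hCH, hι]
      exact hcomm _ _ (hcommι _ _)
    rw [hAinv, hAinv'] at h2
    rw [h1] at h2
    linarith
  have hc2 : (2 : ℝ) < |(c : ℝ)| := by
    have : ((2 : ℤ) : ℝ) < ((|c| : ℤ) : ℝ) := by exact_mod_cast htr
    simpa [Int.cast_abs] using this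
  nlinarith [hnonneg (ι v), key, hc2]
end

section
/- Let G = ℤ² ⋊_A ℤ where A = [[1, n], [0, 1]] ∈ SL₂(ℤ) with n ≠ 0. Then any length function l : G → [0,∞) vanishes on the element (1,0) ∈ ℤ² (the eigenvector direction of A). -/
/-- In the semidirect product `ℤ² ⋊_A ℤ` with `A = [[1, n], [0, 1]]`, `n ≠ 0`, any
length function vanishes on the eigenvector `(1,0) ∈ ℤ²` of `A`. -/
theorem length_function_vanishes_on_eigenvector_parabolic
    {G : Type*} [Group G] (n : ℤ) (hn : n ≠ 0)
    (ι : (Fin 2 → ℤ) → G) (hι : ∀ v w : Fin 2 → ℤ, ι (v + w) = ι v * ι w)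
    (hinj : Function.Injective ι)
    (t : G)
    (ht : ∀ v : Fin 2 → ℤ, t * ι v * t⁻¹ = ι ((!![1, n; 0, 1] : Matrix (Fin 2) (Fin 2) ℤ).mulVec v))
    (l : G → ℝ)
    (hnonneg : ∀ g : G, 0 ≤ l g)
    (hpow : ∀ (g : G) (k : ℤ), l (g ^ k) = |(k : ℝ)| * l g)
    (hconj : ∀ a g : G, l (a * g * a⁻¹) = l g)
    (hcomm : ∀ a b : G, a * b = b * a → l (a * b) ≤ l a + l b) :
    l (ι ![1, 0]) = 0 := by
  have hone : ι 0 = 1 := by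
    have h := hι 0 0
    rw [add_zero] at h
    exact (left_eq_mul.mp h)
  let F : Multiplicative (Fin 2 → ℤ) →* G :=
    { toFun := fun v => ι v.toAdd
      map_one' := hone
      map_mul' := fun a b => hι _ _ }
  have hzpow : ∀ (v : Fin 2 → ℤ) (k : ℤ), ι (k • v) = ι v ^ k := by
    intro v k
    have h := F.map_zpow (Multiplicative.ofAdd v) k
    simpa [F] using h
  have hA : ∀ a : ℤ, (!![1, n; 0, 1] : Matrix (Fin 2) (Fin 2) ℤ).mulVec ![a, 1] = ![a + n, 1] := by
    intro a
    funext i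
    fin_cases i <;> simp [Matrix.mulVec, dotProduct, Fin.sum_univ_two] <;> ring
  have hk : ∀ k : ℕ, t ^ k * ι ![0, 1] * (t ^ k)⁻¹ = ι ![(k : ℤ) * n, 1] := by
    intro k
    induction k with
    | zero => simp
    | succ k ih =>
      have hts : t ^ (k + 1) = t * t ^ k := by rw [pow_succ']
      rw [hts, mul_inv_rev]
      calc t * t ^ k * ι ![0, 1] * ((t ^ k)⁻¹ * t⁻¹)
          = t * (t ^ k * ι ![0, 1] * (t ^ k)⁻¹) * t⁻¹ := by group
        _ = t * ι ![(k : ℤ) * n, 1] * t⁻¹ := by rw [ih]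
        _ = ι ((!![1, n; 0, 1] : Matrix (Fin 2) (Fin 2) ℤ).mulVec ![(k : ℤ) * n, 1]) := ht _
        _ = ι ![((k : ℕ) + 1 : ℤ) * n, 1] := by
              rw [hA]; congr 1; funext i; fin_cases i <;> push_cast <;> ring_nf
  have hbound : ∀ k : ℕ, (k : ℝ) * |(n : ℝ)| * l (ι ![1, 0]) ≤ 2 * l (ι ![0, 1]) := by
    intro k
    have h1 : l (ι ![(k : ℤ) * n, 1]) = l (ι ![0, 1]) := by
      rw [← hk k]; exact hconj _ _
    have hsum : (![(k : ℤ) * n, 1] : Fin 2 → ℤ) + ![0, -1] = ![(k : ℤ) * n, 0] := by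
      funext i; fin_cases i <;> simp
    have h2 : ι ![(k : ℤ) * n, 0] = ι ![(k : ℤ) * n, 1] * ι ![0, -1] := by
      rw [← hι, hsum]
    have hcommab : ι ![(k : ℤ) * n, 1] * ι ![0, -1] = ι ![0, -1] * ι ![(k : ℤ) * n, 1] := by
      rw [← hι, ← hι, add_comm]
    have hneg : l (ι ![0, -1]) = l (ι ![0, 1]) := by
      have h : ι (![(0 : ℤ), -1]) = (ι ![0, 1]) ^ (-1 : ℤ) := by
        rw [← hzpow]; congr 1; funext i; fin_cases i <;> simp
      rw [h, hpow]; simp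
    have h3 : l (ι ![(k : ℤ) * n, 0]) ≤ 2 * l (ι ![0, 1]) := by
      rw [h2]
      calc l (ι ![(k : ℤ) * n, 1] * ι ![0, -1])
          ≤ l (ι ![(k : ℤ) * n, 1]) + l (ι ![0, -1]) := hcomm _ _ hcommab
        _ = 2 * l (ι ![0, 1]) := by rw [h1, hneg]; ring
    have h4 : ι ![(k : ℤ) * n, 0] = (ι ![1, 0]) ^ ((k : ℤ) * n) := by
      rw [← hzpow]; congr 1; funext i; fin_cases i <;> simp
    rw [h4, hpow] at h3
    have habs : |(((k : ℤ) * n : ℤ) : ℝ)| = (k : ℝ) * |(n : ℝ)| := by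
      push_cast
      rw [abs_mul, abs_of_nonneg (by positivity : (0 : ℝ) ≤ (k : ℝ))]
    rw [habs] at h3
    exact h3
  by_contra hne
  have hL : 0 < l (ι ![1, 0]) := lt_of_le_of_ne (hnonneg _) (Ne.symm hne)
  have habspos : 0 < |(n : ℝ)| := by
    rw [abs_pos]
    exact_mod_cast hn
  have hpos : 0 < |(n : ℝ)| * l (ι ![1, 0]) := mul_pos habspos hL
  obtain ⟨k, hk'⟩ := exists_nat_gt (2 * l (ι ![0, 1]) / (|(n : ℝ)| * l (ι ![1, 0])))
  have h5 : 2 * l (ι ![0, 1]) < (k : ℝ) * (|(n : ℝ)| * l (ι ![1, 0])) :=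
    (div_lt_iff₀ hpos).mp hk'
  have h6 := hbound k
  rw [mul_assoc] at h6
  linarith
end

section
/- Let A ∈ GL_n(ℤ) and G = ℤⁿ ⋊_A ℤ. Suppose for some k ≥ 1 the characteristic polynomial of A^k is Σ_{i=0}^{n} a_i x^i and there exists an index i with |a_i| > Σ_{j≠i} |a_j|. Then any length function l on G vanishes on ℤⁿ. -/
/-- Let `A ∈ GL_n(ℤ)` and `G = ℤⁿ ⋊_A ℤ`.  If for some `k ≥ 1` the characteristic
polynomial `Σ a_i x^i` of `A^k` has a coefficient dominating the sum of the absolute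
values of the others, then any length function on `G` vanishes on `ℤⁿ`. -/
theorem length_function_vanishes_on_Zn_of_dominant_coeff
    {G : Type*} [Group G] {m : ℕ} (A : GL (Fin m) ℤ)
    (k : ℕ) (hk : 1 ≤ k) (i : ℕ) (hi : i ≤ m)
    (hdom : (Finset.range (m + 1)).sum
        (fun j => if j = i then 0 else |(((A : Matrix (Fin m) (Fin m) ℤ) ^ k).charpoly.coeff j)|)
      < |(((A : Matrix (Fin m) (Fin m) ℤ) ^ k).charpoly.coeff i)|)
    (ι : (Fin m → ℤ) → G) (hι : ∀ v w : Fin m → ℤ, ι (v + w) = ι v * ι w)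
    (hinj : Function.Injective ι)
    (t : G) (ht : ∀ v : Fin m → ℤ, t * ι v * t⁻¹ = ι ((A : Matrix (Fin m) (Fin m) ℤ).mulVec v))
    (l : G → ℝ)
    (hnonneg : ∀ g : G, 0 ≤ l g)
    (hpow : ∀ (g : G) (n : ℤ), l (g ^ n) = |(n : ℝ)| * l g)
    (hconj : ∀ a g : G, l (a * g * a⁻¹) = l g)
    (hcomm : ∀ a b : G, a * b = b * a → l (a * b) ≤ l a + l b) :
    ∀ v : Fin m → ℤ, l (ι v) = 0 := by
  set B : Matrix (Fin m) (Fin m) ℤ := (A : Matrix (Fin m) (Fin m) ℤ) with hB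
  set M : Matrix (Fin m) (Fin m) ℤ := B ^ k with hM
  -- basic facts about ι
  have hι0 : ι 0 = 1 := by
    have h := hι 0 0
    simp only [add_zero] at h
    exact (mul_left_cancel (a := ι 0) (by rw [mul_one, ← h])).symm
  have hl1 : l 1 = 0 := by
    have := hpow 1 0
    simpa using this
  have hcommι : ∀ v w : Fin m → ℤ, ι v * ι w = ι w * ι v := by
    intro v w; rw [← hι, ← hι, add_comm]
  have hιinv : ∀ v : Fin m → ℤ, ι (-v) = (ι v)⁻¹ := by
    intro v
    have h : ι v * ι (-v) = 1 := by rw [← hι]; simpa using hι0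
    exact eq_inv_of_mul_eq_one_right (by rw [← hι]; simpa using hι0)
  have hιnsmul : ∀ (n : ℕ) (v : Fin m → ℤ), ι (n • v) = (ι v) ^ n := by
    intro n v
    induction n with
    | zero => simpa using hι0
    | succ n ih => rw [succ_nsmul, hι, ih, pow_succ]
  have hιzsmul : ∀ (n : ℤ) (v : Fin m → ℤ), ι (n • v) = (ι v) ^ n := by
    intro n v
    cases n with
    | ofNat n => simpa using hιnsmul n v
    | negSucc n =>
        rw [negSucc_zsmul, hιinv, hιnsmul, zpow_negSucc]
  have hsmul_l : ∀ (n : ℤ) (v : Fin m → ℤ), l (ι (n • v)) = (|n| : ℤ) * l (ι v) := by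
    intro n v
    rw [hιzsmul, hpow, Int.cast_abs]
  -- invariance under B
  have hBinv : ∀ v : Fin m → ℤ, l (ι (B.mulVec v)) = l (ι v) := by
    intro v; rw [← ht v, hconj]
  have hBpow : ∀ (j : ℕ) (v : Fin m → ℤ), l (ι ((B ^ j).mulVec v)) = l (ι v) := by
    intro j
    induction j with
    | zero => intro v; simp [Matrix.one_mulVec]
    | succ j ih =>
        intro v
        have : (B ^ (j+1)).mulVec v = B.mulVec ((B ^ j).mulVec v) := by
          rw [Matrix.mulVec_mulVec, ← pow_succ']
        rw [this, hBinv, ih]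
  -- subadditivity over finite sums
  have hsum : ∀ (s : Finset ℕ) (w : ℕ → Fin m → ℤ),
      l (ι (∑ j ∈ s, w j)) ≤ ∑ j ∈ s, l (ι (w j)) := by
    intro s w
    induction s using Finset.induction_on with
    | empty => simp [hι0, hl1]
    | insert a s' hns ih =>
        rw [Finset.sum_insert hns, Finset.sum_insert hns, hι]
        exact le_trans (hcomm _ _ (hcommι _ _)) (by linarith)
  intro v
  -- Cayley–Hamilton for M
  have hdeg : M.charpoly.natDegree = m := by
    rw [M.charpoly_natDegree_eq_dim, Fintype.card_fin]
  have hCH : ∑ j ∈ Finset.range (m + 1), M.charpoly.coeff j • M ^ j = 0 := by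
    have h := M.aeval_self_charpoly
    rw [Polynomial.aeval_eq_sum_range, hdeg] at h
    exact h
  set w : ℕ → Fin m → ℤ := fun j => (M ^ j).mulVec v with hw
  have hv : ∑ j ∈ Finset.range (m + 1), M.charpoly.coeff j • w j = 0 := by
    have hs := map_sum (AddMonoidHom.mk' (fun N : Matrix (Fin m) (Fin m) ℤ => N.mulVec v)
      (fun N P => Matrix.add_mulVec N P v))
      (fun j => M.charpoly.coeff j • M ^ j) (Finset.range (m + 1))
    simp only [AddMonoidHom.mk'_apply] at hs
    have h0 := congrArg (fun N : Matrix (Fin m) (Fin m) ℤ => N.mulVec v) hCH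
    simp only [Matrix.zero_mulVec] at h0
    rw [hs] at h0
    rw [← h0]
    exact Finset.sum_congr rfl fun j _ => by rw [Matrix.smul_mulVec]
  have hi' : i ∈ Finset.range (m + 1) := Finset.mem_range.mpr (Nat.lt_succ_of_le hi)
  have hre : M.charpoly.coeff i • w i
      = ∑ j ∈ (Finset.range (m + 1)).erase i, (-(M.charpoly.coeff j)) • w j := by
    have h := Finset.add_sum_erase _ (fun j => M.charpoly.coeff j • w j) hi'
    have h2 : M.charpoly.coeff i • w i + ∑ j ∈ (Finset.range (m+1)).erase i,
        M.charpoly.coeff j • w j = 0 := by rw [h]; exact hv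
    have := eq_neg_of_add_eq_zero_left h2
    rw [this, ← Finset.sum_neg_distrib]
    exact Finset.sum_congr rfl (fun j _ => (neg_smul _ _).symm)
  -- invariance of w j
  have hwinv : ∀ j : ℕ, l (ι (w j)) = l (ι v) := by
    intro j
    have : M ^ j = B ^ (k * j) := by rw [hM, ← pow_mul]
    rw [hw]; simp only [this]; exact hBpow (k * j) v
  -- the main estimate
  have hL : ((|M.charpoly.coeff i| : ℤ) : ℝ) * l (ι v)
      ≤ ∑ j ∈ (Finset.range (m + 1)).erase i, ((|M.charpoly.coeff j| : ℤ) : ℝ) * l (ι v) := by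
    calc ((|M.charpoly.coeff i| : ℤ) : ℝ) * l (ι v)
        = l (ι (M.charpoly.coeff i • w i)) := by rw [hsmul_l, hwinv]
      _ = l (ι (∑ j ∈ (Finset.range (m + 1)).erase i, (-(M.charpoly.coeff j)) • w j)) := by
          rw [hre]
      _ ≤ ∑ j ∈ (Finset.range (m + 1)).erase i, l (ι ((-(M.charpoly.coeff j)) • w j)) :=
          hsum _ _
      _ = ∑ j ∈ (Finset.range (m + 1)).erase i, ((|M.charpoly.coeff j| : ℤ) : ℝ) * l (ι v) := by
          refine Finset.sum_congr rfl (fun j _ => ?_)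
          rw [hsmul_l, hwinv, abs_neg]
  -- rewrite hdom's sum
  have hdom' : ∑ j ∈ (Finset.range (m + 1)).erase i, |M.charpoly.coeff j|
      < |M.charpoly.coeff i| := by
    have he : ∑ j ∈ (Finset.range (m + 1)).erase i, |M.charpoly.coeff j|
        = ∑ j ∈ (Finset.range (m + 1)).erase i,
            (fun j => if j = i then 0 else |M.charpoly.coeff j|) j := by
      refine Finset.sum_congr rfl (fun j hj => ?_)
      simp [Finset.ne_of_mem_erase hj]
    rw [he, Finset.sum_erase _ (by simp)]
    exact hdom
  have hS : (∑ j ∈ (Finset.range (m + 1)).erase i, ((|M.charpoly.coeff j| : ℤ) : ℝ))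
      < ((|M.charpoly.coeff i| : ℤ) : ℝ) := by exact_mod_cast hdom'
  rw [← Finset.sum_mul] at hL
  nlinarith [hnonneg (ι v), hL, hS]
end

section
/- Let H be the integral Heisenberg group ⟨a, b, c | aba⁻¹b⁻¹ = c, ac = ca, bc = cb⟩ and f : H → ℝ a conjugation-invariant function (f(xgx⁻¹) = f(g) for all x, g). Then for any coprime integers m, n (not both zero) and any integer k, f(a^m b^n c^k) = f(a^m b^n). -/
private lemma heis_comm_left {H : Type*} [Group H] {x y : H} (h : x * y = y * x) (z : H) :
    x * (y * z) = y * (x * z) := by rw [← mul_assoc, h, mul_assoc]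

/-- In the Heisenberg group (generators `a, b` with `⁅a,b⁆ = c` central among them),
any conjugation-invariant function `f` satisfies `f (a^m b^n c^k) = f (a^m b^n)`
for coprime integers `m, n` and any integer `k`. -/
theorem heisenberg_conj_invariant_function {H : Type*} [Group H] (a b c : H)
    (hab : a * b * a⁻¹ * b⁻¹ = c) (hac : a * c = c * a) (hbc : b * c = c * b)
    (f : H → ℝ) (hconj : ∀ x g : H, f (x * g * x⁻¹) = f g)
    (m n : ℤ) (hmn : IsCoprime m n) (k : ℤ) :
    f (a ^ m * b ^ n * c ^ k) = f (a ^ m * b ^ n) := by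
  have hac' : Commute a c := hac
  have hbc' : Commute b c := hbc
  have cca : ∀ j : ℤ, Commute (c ^ j) a := fun j => hac'.symm.zpow_left j
  have ccb : ∀ j : ℤ, Commute (c ^ j) b := fun j => hbc'.symm.zpow_left j
  have e1 : a * b = b * c * a := by
    rw [hbc, ← hab]; group
  have sab : SemiconjBy a b (b * c) := e1
  have F1 : ∀ q : ℤ, a * b ^ q = b ^ q * c ^ q * a := by
    intro q
    have h := (sab.zpow_right q).eq
    rwa [hbc'.mul_zpow] at h
  have e2 : b⁻¹ * a = a * c * b⁻¹ := by
    calc b⁻¹ * a = b⁻¹ * (a * b) * b⁻¹ := by group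
      _ = b⁻¹ * (b * c * a) * b⁻¹ := by rw [e1]
      _ = c * a * b⁻¹ := by group
      _ = a * c * b⁻¹ := by rw [hac]
  have sba : SemiconjBy b⁻¹ a (a * c) := e2
  have F2 : ∀ p : ℤ, b⁻¹ * a ^ p = a ^ p * c ^ p * b⁻¹ := by
    intro p
    have h := (sba.zpow_right p).eq
    rwa [hac'.mul_zpow] at h
  have F1' : ∀ (q : ℤ) (x : H), a * (b ^ q * x) = b ^ q * (c ^ q * (a * x)) := by
    intro q x
    rw [← mul_assoc, F1 q, mul_assoc, mul_assoc]
  have F2' : ∀ (p : ℤ) (x : H), b⁻¹ * (a ^ p * x) = a ^ p * (c ^ p * (b⁻¹ * x)) := by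
    intro p x
    rw [← mul_assoc, F2 p, mul_assoc, mul_assoc]
  have C1 : ∀ j : ℤ, a * (a ^ m * b ^ n * c ^ j) * a⁻¹ = a ^ m * b ^ n * c ^ (n + j) := by
    intro j
    simp only [mul_assoc]
    rw [heis_comm_left ((Commute.refl a).zpow_right m).eq, F1' n,
      heis_comm_left (cca j).symm.eq]
    rw [mul_inv_cancel, mul_one, ← zpow_add]
  have C2 : ∀ j : ℤ, b⁻¹ * (a ^ m * b ^ n * c ^ j) * b = a ^ m * b ^ n * c ^ (m + j) := by
    intro j
    simp only [mul_assoc]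
    rw [(ccb j).eq, heis_comm_left ((Commute.refl b).zpow_right n).symm.eq,
      F2' m, inv_mul_cancel_left, heis_comm_left ((ccb m).zpow_right n).eq, ← zpow_add]
  have step1 : ∀ j : ℤ, f (a ^ m * b ^ n * c ^ (n + j)) = f (a ^ m * b ^ n * c ^ j) := by
    intro j
    rw [← C1 j]
    exact hconj a _
  have step2 : ∀ j : ℤ, f (a ^ m * b ^ n * c ^ (m + j)) = f (a ^ m * b ^ n * c ^ j) := by
    intro j
    rw [← C2 j]
    have h := hconj b⁻¹ (a ^ m * b ^ n * c ^ j)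
    rwa [inv_inv] at h
  have S1 : ∀ z : ℤ, ∀ j : ℤ,
      f (a ^ m * b ^ n * c ^ (j + z * n)) = f (a ^ m * b ^ n * c ^ j) := by
    intro z
    induction z using Int.induction_on with
    | zero => intro j; norm_num
    | succ i ih =>
      intro j
      have h1 : j + (i + 1 : ℤ) * n = n + (j + i * n) := by ring
      rw [h1, step1, ih]
    | pred i ih =>
      intro j
      have h2 := step1 (j + (-i - 1 : ℤ) * n)
      have h3 : n + (j + (-i - 1 : ℤ) * n) = j + (-i : ℤ) * n := by ring
      rw [h3] at h2
      rw [← h2, ih]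
  have S2 : ∀ z : ℤ, ∀ j : ℤ,
      f (a ^ m * b ^ n * c ^ (j + z * m)) = f (a ^ m * b ^ n * c ^ j) := by
    intro z
    induction z using Int.induction_on with
    | zero => intro j; norm_num
    | succ i ih =>
      intro j
      have h1 : j + (i + 1 : ℤ) * m = m + (j + i * m) := by ring
      rw [h1, step2, ih]
    | pred i ih =>
      intro j
      have h2 := step2 (j + (-i - 1 : ℤ) * m)
      have h3 : m + (j + (-i - 1 : ℤ) * m) = j + (-i : ℤ) * m := by ring
      rw [h3] at h2
      rw [← h2, ih]
  obtain ⟨u, v, huv⟩ := hmn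
  have hk : (0 + (v * k) * n) + (u * k) * m = k := by linear_combination k * huv
  calc f (a ^ m * b ^ n * c ^ k)
      = f (a ^ m * b ^ n * c ^ ((0 + (v * k) * n) + (u * k) * m)) := by rw [hk]
    _ = f (a ^ m * b ^ n * c ^ (0 + (v * k) * n)) := S2 (u * k) _
    _ = f (a ^ m * b ^ n * c ^ (0 : ℤ)) := S1 (v * k) 0
    _ = f (a ^ m * b ^ n) := by norm_num
end

section
/- Let H be the integral Heisenberg group with generators a, b and central element c = [a,b]. Then any length function l : H → [0,∞) satisfies l(c) = 0, and consequently l factors through the abelianization H/[H,H] ≅ ℤ². -/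
/-- Any length function on the integral Heisenberg group (generated by `a, b`, with
central commutator `c = ⁅a,b⁆`) vanishes on `c`, and consequently factors through the
abelianization. -/
theorem length_function_heisenberg_vanishes_on_center {H : Type*} [Group H] (a b c : H)
    (hab : a * b * a⁻¹ * b⁻¹ = c) (hac : a * c = c * a) (hbc : b * c = c * b)
    (hgen : Subgroup.closure ({a, b} : Set H) = ⊤)
    (l : H → ℝ)
    (hnonneg : ∀ g : H, 0 ≤ l g)
    (hpow : ∀ (g : H) (n : ℤ), l (g ^ n) = |(n : ℝ)| * l g)
    (hconj : ∀ x g : H, l (x * g * x⁻¹) = l g)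
    (hcomm : ∀ x y : H, x * y = y * x → l (x * y) ≤ l x + l y) :
    l c = 0 ∧
    ∃ l' : Abelianization H → ℝ, ∀ g : H, l' (Abelianization.of g) = l g := by
  -- c is central
  have hc : ∀ h : H, Commute c h := by
    intro h
    have hmem : h ∈ Subgroup.closure ({a, b} : Set H) := by rw [hgen]; trivial
    induction hmem using Subgroup.closure_induction with
    | mem x hx =>
      rcases hx with rfl | rfl
      · exact (Commute.eq hac ▸ hac.symm : c * x = x * c)
      · exact (hbc.symm : c * x = x * c)
    | one => exact Commute.one_right c
    | mul x y _ _ h1 h2 => exact h1.mul_right h2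
    | inv x _ h1 => exact h1.inv_right
  -- l of inverses
  have hinv : ∀ g : H, l g⁻¹ = l g := by
    intro g
    have := hpow g (-1)
    simpa using this
  -- conjugating a*b by a multiplies by c
  have hconjab : a * (a * b) * a⁻¹ = (a * b) * c := by
    have h1 : a * b * a⁻¹ = c * b := by rw [← hab]; group
    calc a * (a * b) * a⁻¹ = a * (a * b * a⁻¹) := by group
      _ = a * (c * b) := by rw [h1]
      _ = c * (a * b) := by rw [← mul_assoc, hac, mul_assoc]
      _ = (a * b) * c := (hc (a * b)).eq
  -- l ((a*b) * c^n) = l (a*b) for all n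
  have hl : ∀ n : ℕ, l ((a * b) * c ^ n) = l (a * b) := by
    intro n
    induction n with
    | zero => simp
    | succ n ih =>
      have hid : (a * b) * c ^ (n + 1) = a * ((a * b) * c ^ n) * a⁻¹ := by
        have hca : c ^ n * a⁻¹ = a⁻¹ * c ^ n := ((hc a⁻¹).pow_left n).eq
        calc (a * b) * c ^ (n + 1) = ((a * b) * c) * c ^ n := by
              rw [pow_succ]; group
          _ = (a * (a * b) * a⁻¹) * c ^ n := by rw [hconjab]
          _ = a * ((a * b) * c ^ n) * a⁻¹ := by
              rw [mul_assoc (a * (a * b)) a⁻¹ (c ^ n), ← hca]; group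
      rw [hid, hconj, ih]
  -- n * l c ≤ 2 * l (a*b)
  have hbound : ∀ n : ℕ, (n : ℝ) * l c ≤ 2 * l (a * b) := by
    intro n
    have hcom : (a * b)⁻¹ * ((a * b) * c ^ n) = ((a * b) * c ^ n) * (a * b)⁻¹ := by
      have : Commute ((a * b)⁻¹) ((a * b) * c ^ n) :=
        ((Commute.refl (a * b)).mul_right ((hc (a * b)).symm.pow_right n)).inv_left
      exact this.eq
    have h1 : l ((a * b)⁻¹ * ((a * b) * c ^ n)) ≤ l (a * b)⁻¹ + l ((a * b) * c ^ n) :=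
      hcomm _ _ hcom
    have h2 : (a * b)⁻¹ * ((a * b) * c ^ n) = c ^ n := by group
    rw [h2, hinv, hl] at h1
    have h3 : l (c ^ n) = (n : ℝ) * l c := by
      have := hpow c (n : ℤ)
      rw [zpow_natCast] at this
      simpa using this
    rw [h3] at h1
    linarith
  -- hence l c = 0
  have hlc : l c = 0 := by
    by_contra h
    have hpos : 0 < l c := lt_of_le_of_ne (hnonneg c) (Ne.symm h)
    obtain ⟨n, hn⟩ := exists_nat_gt (2 * l (a * b) / l c)
    have := hbound n
    rw [div_lt_iff₀ hpos] at hn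
    linarith
  refine ⟨hlc, ?_⟩
  -- l (g * c ^ k) = l g
  have hadd : ∀ (g : H) (k : ℤ), l (g * c ^ k) = l g := by
    intro g k
    have hzk : l (c ^ k) = 0 := by rw [hpow, hlc, mul_zero]
    have hcg : ∀ m : ℤ, g * c ^ m = c ^ m * g := fun m => ((hc g).zpow_left m).symm.eq
    have hle : l (g * c ^ k) ≤ l g := by
      have := hcomm g (c ^ k) (hcg k)
      rw [hzk] at this
      linarith
    have hge : l g ≤ l (g * c ^ k) := by
      have heq : (g * c ^ k) * c ^ (-k) = g := by
        rw [mul_assoc, ← zpow_add]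
        simp
      have hz : l (c ^ (-k)) = 0 := by rw [hpow, hlc, mul_zero]
      have hcom : (g * c ^ k) * c ^ (-k) = c ^ (-k) * (g * c ^ k) := by
        rw [mul_assoc, ← zpow_add, add_comm, zpow_add, ← mul_assoc, hcg, mul_assoc]
      have := hcomm (g * c ^ k) (c ^ (-k)) hcom
      rw [heq, hz] at this
      linarith
    linarith
  -- the commutator subgroup lies in ⟨c⟩
  have hconjN : ∀ (x w : H), w ∈ Subgroup.zpowers c → x * w * x⁻¹ ∈ Subgroup.zpowers c := by
    rintro x w ⟨k, rfl⟩
    have h := ((hc x).zpow_left k).eq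
    have : x * c ^ k * x⁻¹ = c ^ k := by rw [← h]; group
    rw [this]
    exact ⟨k, rfl⟩
  have hcmem : c ∈ Subgroup.zpowers c := Subgroup.mem_zpowers c
  open scoped commutatorElement in
  have claim : ∀ g h : H, ⁅g, h⁆ ∈ Subgroup.zpowers c := by
    intro g h
    have hg : g ∈ Subgroup.closure ({a, b} : Set H) := by rw [hgen]; trivial
    have hh : h ∈ Subgroup.closure ({a, b} : Set H) := by rw [hgen]; trivial
    induction hg, hh using Subgroup.closure_induction₂ with
    | mem x y hx hy =>
      rcases hx with rfl | rfl <;> rcases hy with rfl | rfl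
      · simp only [commutatorElement_self]; exact one_mem _
      · have : ⁅x, y⁆ = c := by rw [commutatorElement_def, hab]
        rw [this]; exact hcmem
      · have : ⁅x, y⁆ = c⁻¹ := by
          rw [← commutatorElement_inv, commutatorElement_def, hab]
        rw [this]; exact inv_mem hcmem
      · simp only [commutatorElement_self]; exact one_mem _
    | one_left x hx => simp only [commutatorElement_one_left]; exact one_mem _
    | one_right x hx => simp only [commutatorElement_one_right]; exact one_mem _
    | mul_left x y z hx hy hz h1 h2 =>
      have hid : ⁅x * y, z⁆ = x * ⁅y, z⁆ * x⁻¹ * ⁅x, z⁆ := by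
        simp only [commutatorElement_def]; group
      rw [hid]
      exact mul_mem (hconjN x _ h2) h1
    | mul_right y z x hy hz hx h1 h2 =>
      have hid : ⁅x, y * z⁆ = ⁅x, y⁆ * (y * ⁅x, z⁆ * y⁻¹) := by
        simp only [commutatorElement_def]; group
      rw [hid]
      exact mul_mem h1 (hconjN y _ h2)
    | inv_left x y hx hy h1 =>
      have hid : ⁅x⁻¹, y⁆ = x⁻¹ * ⁅x, y⁆⁻¹ * x := by
        simp only [commutatorElement_def]; group
      rw [hid]
      have := hconjN x⁻¹ _ (inv_mem h1)
      simpa using this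
    | inv_right x y hx hy h1 =>
      have hid : ⁅x, y⁻¹⁆ = y⁻¹ * ⁅x, y⁆⁻¹ * y := by
        simp only [commutatorElement_def]; group
      rw [hid]
      have := hconjN y⁻¹ _ (inv_mem h1)
      simpa using this
  have hsub : commutator H ≤ Subgroup.zpowers c := by
    rw [commutator_def, Subgroup.commutator_le]
    intro g _ h _
    exact claim g h
  -- l is constant on fibers of the abelianization map
  have hsame : ∀ g h : H, Abelianization.of g = Abelianization.of h → l g = l h := by
    intro g h hgh
    have hmem : g⁻¹ * h ∈ commutator H := by
      exact QuotientGroup.eq.mp hgh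
    obtain ⟨k, hk⟩ := hsub hmem
    have hk' : c ^ k = g⁻¹ * h := hk
    have : h = g * c ^ k := by rw [hk']; group
    rw [this, hadd]
  exact ⟨fun q => Quotient.liftOn' q l (fun x y hxy => hsame x y (Quotient.sound' hxy)),
    fun g => rfl⟩
end

section
/- Let f : G → E be a quasi-cocycle: E a normed vector space with an isometric linear G-action, and ‖f(gh) − f(g) − g·f(h)‖ < C for all g, h ∈ G. Then l(g) = lim_{n→∞} ‖f(gⁿ)‖/n exists and defines a length function on G. -/
open Filter Topology

/-- The average norm of a quasi-cocycle is a length function: if `f : G → E` satisfies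
`‖f (g*h) - f g - g • f h‖ < C` for an isometric linear `G`-action `ρ` on a normed
space `E`, then `l g = lim_n ‖f (gⁿ)‖ / n` exists and is a length function. -/
theorem quasi_cocycle_average_norm_is_length_function {G E : Type*} [Group G]
    [NormedAddCommGroup E] [NormedSpace ℝ E]
    (ρ : G →* (E ≃ₗᵢ[ℝ] E)) (f : G → E) (C : ℝ) (hC : 0 < C)
    (hqc : ∀ g h : G, ‖f (g * h) - f g - ρ g (f h)‖ < C) :
    ∃ l : G → ℝ,
      (∀ g : G, Filter.Tendsto (fun n : ℕ => ‖f (g ^ n)‖ / n)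
        Filter.atTop (nhds (l g))) ∧
      (∀ g : G, 0 ≤ l g) ∧
      (∀ (g : G) (n : ℤ), l (g ^ n) = |(n : ℝ)| * l g) ∧
      (∀ h g : G, l (h * g * h⁻¹) = l g) ∧
      (∀ a b : G, a * b = b * a → l (a * b) ≤ l a + l b) := by
  -- basic norm bound
  have hmul : ∀ g h : G, ‖f (g * h)‖ ≤ ‖f g‖ + ‖f h‖ + C := by
    intro g h
    have := (hqc g h).le
    calc ‖f (g * h)‖ = ‖(f (g * h) - f g - ρ g (f h)) + f g + ρ g (f h)‖ := by
          congr 1; abel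
      _ ≤ ‖f (g * h) - f g - ρ g (f h)‖ + ‖f g‖ + ‖(ρ g) (f h)‖ := by
          exact (norm_add_le _ _).trans (by gcongr; exact norm_add_le _ _)
      _ ≤ C + ‖f g‖ + ‖f h‖ := by rw [LinearIsometryEquiv.norm_map]; gcongr
      _ = ‖f g‖ + ‖f h‖ + C := by ring
  -- existence of the limit for each g
  have key : ∀ g : G, ∃ L : ℝ, Tendsto (fun n : ℕ => ‖f (g ^ n)‖ / n) atTop (𝓝 L) := by
    intro g
    set u : ℕ → ℝ := fun n => ‖f (g ^ n)‖ + C with hu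
    have hsub : Subadditive u := by
      intro m n
      have := hmul (g ^ m) (g ^ n)
      simp only [hu, ← pow_add] at *
      linarith
    have hbdd : BddBelow (Set.range fun n : ℕ => u n / n) := by
      refine ⟨0, ?_⟩
      rintro x ⟨n, rfl⟩
      exact div_nonneg (by positivity) (Nat.cast_nonneg n)
    refine ⟨hsub.lim, ?_⟩
    have h1 := hsub.tendsto_lim hbdd
    have h2 := tendsto_const_div_atTop_nhds_zero_nat C
    have h3 := h1.sub h2
    rw [sub_zero] at h3
    refine h3.congr fun n => ?_
    simp only [hu]
    ring
  choose l hl using key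
  -- comparison lemma
  have cmp : ∀ (g₁ g₂ : G) (D : ℝ), (∀ n : ℕ, ‖f (g₁ ^ n)‖ ≤ ‖f (g₂ ^ n)‖ + D) →
      l g₁ ≤ l g₂ := by
    intro g₁ g₂ D hD
    have h2 : Tendsto (fun n : ℕ => ‖f (g₂ ^ n)‖ / n + D / n) atTop (𝓝 (l g₂ + 0)) :=
      (hl g₂).add (tendsto_const_div_atTop_nhds_zero_nat D)
    rw [add_zero] at h2
    refine le_of_tendsto_of_tendsto (hl g₁) h2 ?_
    filter_upwards [eventually_gt_atTop 0] with n hn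
    rw [← add_div]
    gcongr
    exact hD n
  -- nonnegativity
  have hnonneg : ∀ g : G, 0 ≤ l g := by
    intro g
    refine ge_of_tendsto' (hl g) fun n => ?_
    positivity
  -- l 1 = 0
  have hone : l 1 = 0 := by
    have : Tendsto (fun n : ℕ => ‖f ((1:G) ^ n)‖ / n) atTop (𝓝 0) := by
      simpa using tendsto_const_div_atTop_nhds_zero_nat ‖f (1:G)‖
    exact tendsto_nhds_unique (hl 1) this
  -- nat homogeneity
  have hnat : ∀ (g : G) (k : ℕ), l (g ^ k) = k * l g := by
    intro g k
    rcases Nat.eq_zero_or_pos k with rfl | hk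
    · simpa using hone
    · have hcomp : Tendsto (fun n : ℕ => k * n) atTop atTop :=
        tendsto_atTop_mono (fun n => Nat.le_mul_of_pos_left n hk) tendsto_id
      have h1 : Tendsto (fun n : ℕ => ‖f (g ^ (k * n))‖ / (k * n : ℕ)) atTop (𝓝 (l g)) :=
        (hl g).comp hcomp
      have h2 : Tendsto (fun n : ℕ => (k : ℝ) * (‖f (g ^ (k * n))‖ / (k * n : ℕ)))
          atTop (𝓝 ((k : ℝ) * l g)) := h1.const_mul _
      have h3 : Tendsto (fun n : ℕ => ‖f ((g ^ k) ^ n)‖ / n) atTop (𝓝 ((k : ℝ) * l g)) := by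
        refine h2.congr fun n => ?_
        rw [← pow_mul]
        push_cast
        rcases Nat.eq_zero_or_pos n with rfl | hn
        · simp
        · field_simp
      exact tendsto_nhds_unique (hl _) h3
  -- inverse
  have hinvle : ∀ g : G, l g⁻¹ ≤ l g := by
    intro g
    refine cmp g⁻¹ g (‖f (1:G)‖ + C) fun n => ?_
    have h := (hqc (g ^ n) (g ^ n)⁻¹).le
    rw [mul_inv_cancel] at h
    set v := ρ (g ^ n) (f (g ^ n)⁻¹) with hv
    have h1 : ‖f (g ^ n) + v‖ ≤ ‖f (1:G)‖ + C := by
      calc ‖f (g ^ n) + v‖ = ‖f 1 - (f 1 - f (g ^ n) - v)‖ := by congr 1; abel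
        _ ≤ ‖f (1:G)‖ + ‖f 1 - f (g ^ n) - v‖ := norm_sub_le _ _
        _ ≤ ‖f (1:G)‖ + C := by linarith
    have h4 : ‖v‖ ≤ ‖f (g ^ n)‖ + (‖f (1:G)‖ + C) := by
      calc ‖v‖ = ‖(f (g ^ n) + v) - f (g ^ n)‖ := by rw [add_sub_cancel_left]
        _ ≤ ‖f (g ^ n) + v‖ + ‖f (g ^ n)‖ := norm_sub_le _ _
        _ ≤ ‖f (g ^ n)‖ + (‖f (1:G)‖ + C) := by linarith
    rw [hv, LinearIsometryEquiv.norm_map, ← inv_pow] at h4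
    linarith
  have hinv : ∀ g : G, l g⁻¹ = l g := fun g =>
    le_antisymm (hinvle g) (by simpa using hinvle g⁻¹)
  -- conjugation
  have hconjle : ∀ h g : G, l (h * g * h⁻¹) ≤ l g := by
    intro h g
    refine cmp (h * g * h⁻¹) g (‖f h‖ + ‖f h⁻¹‖ + 2 * C) fun n => ?_
    rw [conj_pow]
    calc ‖f (h * g ^ n * h⁻¹)‖ = ‖f (h * (g ^ n * h⁻¹))‖ := by rw [mul_assoc]
      _ ≤ ‖f h‖ + ‖f (g ^ n * h⁻¹)‖ + C := hmul _ _
      _ ≤ ‖f h‖ + (‖f (g ^ n)‖ + ‖f h⁻¹‖ + C) + C := by gcongr; exact hmul _ _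
      _ = ‖f (g ^ n)‖ + (‖f h‖ + ‖f h⁻¹‖ + 2 * C) := by ring
  have hconj : ∀ h g : G, l (h * g * h⁻¹) = l g := by
    intro h g
    refine le_antisymm (hconjle h g) ?_
    have := hconjle h⁻¹ (h * g * h⁻¹)
    rw [inv_inv] at this
    have e : h⁻¹ * (h * g * h⁻¹) * h = g := by group
    rwa [e] at this
  refine ⟨l, hl, hnonneg, ?_, hconj, ?_⟩
  · intro g n
    rcases n with m | m
    · rw [Int.ofNat_eq_coe, zpow_natCast, hnat]
      simp [abs_of_nonneg]
    · rw [zpow_negSucc, ← inv_pow, hnat, hinv, Int.cast_negSucc, abs_neg, Nat.abs_cast]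
  · intro a b hab
    have hcomm : Commute a b := hab
    have hD : ∀ n : ℕ, ‖f ((a * b) ^ n)‖ ≤ ‖f (a ^ n)‖ + ‖f (b ^ n)‖ + C := by
      intro n
      rw [hcomm.mul_pow]
      exact hmul _ _
    have h2 : Tendsto (fun n : ℕ => ‖f (a ^ n)‖ / n + ‖f (b ^ n)‖ / n + C / n)
        atTop (𝓝 (l a + l b + 0)) :=
      ((hl a).add (hl b)).add (tendsto_const_div_atTop_nhds_zero_nat C)
    rw [add_zero] at h2
    refine le_of_tendsto_of_tendsto (hl (a * b)) h2 ?_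
    filter_upwards [eventually_gt_atTop 0] with n hn
    have hn' : (0:ℝ) < n := by exact_mod_cast hn
    rw [← add_div, ← add_div]
    gcongr
    exact hD n
end

section
/- Let l be a length function on SL_n(ℝ) (n ≥ 2). Then l vanishes on every unipotent element of SL_n(ℝ). -/
open Polynomial DirectSum

noncomputable section LengthAux

namespace LengthAux

/-- square root of `1+X` modulo `X^m`. -/
lemma exists_sqrt_one_add_X (m : ℕ) :
    ∃ s : ℝ[X], s.coeff 0 = 1 ∧ (X : ℝ[X]) ^ m ∣ s ^ 2 - (1 + X) := by
  induction m with
  | zero => exact ⟨1, by simp, by simp⟩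
  | succ j ih =>
    obtain ⟨s, hs0, e, he⟩ := ih
    rcases Nat.eq_zero_or_pos j with rfl | hj
    · exact ⟨1, by simp, -1, by ring⟩
    · have hj' : (0:ℕ) ≠ j := fun h => hj.ne' h.symm
      set c : ℝ := -e.coeff 0 / 2 with hc
      set q : ℝ[X] := e + 2 * C c * s + C c * C c * X ^ j with hq
      have hXq : (X : ℝ[X]) ∣ q := by
        rw [X_dvd_iff]
        simp [hq, coeff_X_pow, hj', hs0, hc]
        ring
      obtain ⟨r, hr⟩ := hXq
      refine ⟨s + C c * X ^ j, by simp [coeff_X_pow, hj', hs0], r, ?_⟩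
      calc (s + C c * X ^ j) ^ 2 - (1 + X) = X ^ j * q := by
            rw [hq]; linear_combination he
        _ = X ^ (j+1) * r := by rw [hr]; ring

abbrev QQ (m : ℕ) := ℝ[X] ⧸ (ℝ[X] ∙ (X:ℝ[X]) ^ m)

variable (m : ℕ)

def mkk : ℝ[X] →ₐ[ℝ] QQ m := Ideal.Quotient.mkₐ ℝ (Submodule.span ℝ[X] {(X:ℝ[X])^m})

lemma aeval_mk (g p : ℝ[X]) : aeval (mkk m g) p = mkk m (p.comp g) := by
  rw [aeval_algHom_apply, comp_eq_aeval]

def hpoly : ℝ[X] := X^2 + 2*X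

def Phi (g : ℝ[X]) (hg : (X:ℝ[X])^m ∣ g ^ m) : QQ m →ₐ[ℝ] QQ m :=
  Ideal.Quotient.liftₐ _ (aeval (mkk m g)) (by
    intro a ha
    rw [Submodule.mem_span_singleton] at ha
    obtain ⟨b, rfl⟩ := ha
    rw [smul_eq_mul, mul_comm]
    rw [map_mul]
    have : (aeval (mkk m g)) ((X:ℝ[X])^m) = 0 := by
      rw [map_pow, aeval_X]
      show mkk m g ^ m = 0
      rw [← map_pow]
      exact (Submodule.Quotient.mk_eq_zero _).mpr
        (Submodule.mem_span_singleton.mpr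
          (by obtain ⟨c, hc⟩ := hg; exact ⟨c, by rw [smul_eq_mul, mul_comm, ← hc]⟩))
    rw [this, zero_mul])

lemma Phi_mk (g : ℝ[X]) (hg : (X:ℝ[X])^m ∣ g ^ m) (p : ℝ[X]) :
    Phi m g hg (mkk m p) = mkk m (p.comp g) := by
  rw [← aeval_mk]
  rfl

lemma mkk_surjective : Function.Surjective (mkk m) :=
  Ideal.Quotient.mk_surjective (I := (ℝ[X] ∙ (X:ℝ[X]) ^ m))

lemma mkk_eq_mkk_of_dvd {a b : ℝ[X]} (h : (X:ℝ[X])^m ∣ a - b) : mkk m a = mkk m b := by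
  have : a - b ∈ (ℝ[X] ∙ (X:ℝ[X]) ^ m) := by
    obtain ⟨c, hc⟩ := h
    exact Submodule.mem_span_singleton.mpr ⟨c, by rw [smul_eq_mul, mul_comm, ← hc]⟩
  exact (Submodule.Quotient.eq _).mpr this

lemma Phi_semilinear (g : ℝ[X]) (hg : (X:ℝ[X])^m ∣ g ^ m) (p : ℝ[X]) (w : QQ m) :
    Phi m g hg (p • w) = (p.comp g) • (Phi m g hg w) := by
  obtain ⟨q, rfl⟩ := mkk_surjective m w
  have h1 : p • (mkk m q) = mkk m (p * q) := rfl
  have h2 : (p.comp g) • (mkk m (q.comp g)) = mkk m (p.comp g * q.comp g) := rfl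
  rw [h1, Phi_mk, Phi_mk, mul_comp, h2]

lemma hpoly_pow_dvd : (X:ℝ[X])^m ∣ hpoly ^ m :=
  pow_dvd_pow_of_dvd ⟨X + 2, by rw [hpoly]; ring⟩ m

def PhiH : QQ m →ₐ[ℝ] QQ m := Phi m hpoly (hpoly_pow_dvd m)

lemma PhiH_semilinear (p : ℝ[X]) (w : QQ m) :
    PhiH m (p • w) = (p.comp hpoly) • (PhiH m w) :=
  Phi_semilinear m hpoly (hpoly_pow_dvd m) p w

lemma PhiH_injective : Function.Injective (PhiH m) := by
  obtain ⟨s, hs0, hdvd⟩ := exists_sqrt_one_add_X m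
  set g : ℝ[X] := s - 1 with hgdef
  have hgX : (X:ℝ[X]) ∣ g := X_dvd_iff.mpr (by simp [hgdef, hs0])
  have hg : (X:ℝ[X])^m ∣ g^m := pow_dvd_pow_of_dvd hgX m
  have key : ∀ w, Phi m g hg (PhiH m w) = w := by
    intro w
    obtain ⟨q, rfl⟩ := mkk_surjective m w
    rw [PhiH, Phi_mk, Phi_mk, Polynomial.comp_assoc]
    have h1 : hpoly.comp g = g^2 + 2*g := by
      simp [hpoly, add_comp, pow_comp, mul_comp, X_comp]
    have h2 : mkk m (hpoly.comp g) = mkk m X := by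
      apply mkk_eq_mkk_of_dvd
      rw [h1]
      have : g^2 + 2*g - X = s^2 - (1+X) := by rw [hgdef]; ring
      rw [this]; exact hdvd
    rw [← aeval_mk, h2, aeval_mk, comp_X]
  intro w1 w2 h
  have := key w1
  rw [h, key w2] at this
  exact this.symm

/-- A unipotent matrix is conjugate to its square by an invertible matrix. -/
lemma exists_conj {n : ℕ} (U : Matrix (Fin n) (Fin n) ℝ) (hU : IsNilpotent (U - 1)) :
    ∃ P Pinv : Matrix (Fin n) (Fin n) ℝ,
      P * Pinv = 1 ∧ Pinv * P = 1 ∧ P * U = U ^ 2 * P := by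
  classical
  set A : Matrix (Fin n) (Fin n) ℝ ≃ₐ[ℝ] Module.End ℝ (Fin n → ℝ) := Matrix.toLinAlgEquiv' with hA
  set T : Module.End ℝ (Fin n → ℝ) := A (U - 1) with hT
  have hTnil : IsNilpotent T := by
    obtain ⟨k, hk⟩ := hU
    exact ⟨k, by rw [hT, ← map_pow, hk, map_zero]⟩
  have htors : Module.IsTorsion' (Module.AEval' T) (Submonoid.powers (X : ℝ[X])) := by
    intro x
    obtain ⟨k, hk⟩ := hTnil
    refine ⟨⟨X^k, k, rfl⟩, ?_⟩
    show (X:ℝ[X])^k • x = 0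
    obtain ⟨v, rfl⟩ := (Module.AEval'.of T).surjective x
    rw [← Module.AEval.of_aeval_smul]
    simp [hk, Module.End.smul_def]
  haveI : ∀ x : Module.AEval' T, Decidable (x = 0) := fun _ => Classical.dec _
  obtain ⟨d, k, ⟨e⟩⟩ := Module.torsion_by_prime_power_decomposition
    (Polynomial.irreducible_X) htors
  -- the twisting map on the direct sum
  set Phat : (⨁ i : Fin d, QQ (k i)) →ₗ[ℝ] (⨁ i : Fin d, QQ (k i)) :=
    DFinsupp.mapRange.linearMap (fun i => (PhiH (k i)).toLinearMap) with hPhat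
  have hPhat_apply : ∀ (w : ⨁ i : Fin d, QQ (k i)) (i : Fin d),
      Phat w i = PhiH (k i) (w i) := by
    intro w i
    rfl
  have hsemi : ∀ (p : ℝ[X]) w, Phat (p • w) = (p.comp hpoly) • Phat w := by
    intro p w
    refine DFinsupp.ext fun i => ?_
    have h1 : (p • w) i = p • w i := rfl
    have h2 : ((p.comp hpoly) • Phat w) i = (p.comp hpoly) • (Phat w i) := rfl
    rw [hPhat_apply, h1, h2, hPhat_apply, PhiH_semilinear]
  have hinj : Function.Injective Phat := by
    intro a b hab
    refine DFinsupp.ext fun i => ?_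
    apply PhiH_injective (k i)
    rw [← hPhat_apply, ← hPhat_apply, hab]
  set E : (Fin n → ℝ) →ₗ[ℝ] (Fin n → ℝ) :=
    ((Module.AEval'.of T).symm.toLinearMap) ∘ₗ ((e.symm.restrictScalars ℝ).toLinearMap)
      ∘ₗ Phat ∘ₗ ((e.restrictScalars ℝ).toLinearMap)
      ∘ₗ ((Module.AEval'.of T).toLinearMap) with hE
  have hEapply : ∀ v, E v
      = (Module.AEval'.of T).symm (e.symm (Phat (e (Module.AEval'.of T v)))) := fun v => rfl
  have hkey : ∀ (p : ℝ[X]) v, E ((aeval (R := ℝ) T p) v) = (aeval (R := ℝ) T (p.comp hpoly)) (E v) := by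
    intro p v
    have s1 : (Module.AEval'.of T) ((aeval (R := ℝ) T p) v) = p • (Module.AEval'.of T) v :=
      Module.AEval.of_aeval_smul T p v
    have s2 : e (p • (Module.AEval'.of T) v) = p • e ((Module.AEval'.of T) v) := map_smul e p _
    have s3 := hsemi p (e ((Module.AEval'.of T) v))
    have s4 : e.symm ((p.comp hpoly) • Phat (e ((Module.AEval'.of T) v)))
        = (p.comp hpoly) • e.symm (Phat (e ((Module.AEval'.of T) v))) := map_smul e.symm _ _
    have s5 := Module.AEval.of_symm_smul T (p.comp hpoly)
      (e.symm (Phat (e ((Module.AEval'.of T) v))))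
    rw [hEapply, hEapply, s1, s2, s3, s4, s5]
    rfl
  have hEinj : Function.Injective E := by
    intro v1 v2 h
    rw [hEapply, hEapply] at h
    have h2 := hinj (e.symm.injective ((Module.AEval'.of T).symm.injective h))
    exact (Module.AEval'.of T).injective (e.injective h2)
  have hEsurj := LinearMap.injective_iff_surjective.mp hEinj
  set Eeq := LinearEquiv.ofBijective E ⟨hEinj, hEsurj⟩ with hEeq
  have hEeqcoe : ∀ v, Eeq v = E v := fun v => rfl
  have hid1 : E ∘ₗ (Eeq.symm : (Fin n → ℝ) →ₗ[ℝ] (Fin n → ℝ)) = LinearMap.id := by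
    apply LinearMap.ext; intro v
    show E (Eeq.symm v) = v
    rw [← hEeqcoe, Eeq.apply_symm_apply]
  have hid2 : (Eeq.symm : (Fin n → ℝ) →ₗ[ℝ] (Fin n → ℝ)) ∘ₗ E = LinearMap.id := by
    apply LinearMap.ext; intro v
    show Eeq.symm (E v) = v
    rw [← hEeqcoe, Eeq.symm_apply_apply]
  have hAM : ∀ M : Matrix (Fin n) (Fin n) ℝ,
      LinearMap.toMatrix' (A M : (Fin n → ℝ) →ₗ[ℝ] (Fin n → ℝ)) = M := by
    intro M
    rw [show (A M : (Fin n → ℝ) →ₗ[ℝ] (Fin n → ℝ)) = Matrix.toLin' M from rfl,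
      LinearMap.toMatrix'_toLin']
  have e1 : aeval (R := ℝ) T (1 + X) = (A U : (Fin n → ℝ) →ₗ[ℝ] (Fin n → ℝ)) := by
    rw [map_add (aeval (R := ℝ) T) 1 X, aeval_one, aeval_X, hT]
    calc (1 : Module.End ℝ (Fin n → ℝ)) + A (U - 1)
        = A 1 + A (U - 1) := by rw [map_one]
      _ = A (1 + (U - 1)) := (map_add A 1 (U - 1)).symm
      _ = A U := by congr 1; abel
  have e2 : aeval (R := ℝ) T ((1+X).comp hpoly)
      = (A (U^2) : (Fin n → ℝ) →ₗ[ℝ] (Fin n → ℝ)) := by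
    have hc : ((1:ℝ[X])+X).comp hpoly = (1+X)^2 := by
      rw [hpoly, add_comp, one_comp, X_comp]; ring
    rw [hc, map_pow, e1, ← map_pow]
  have hcomp : E ∘ₗ (A U : (Fin n → ℝ) →ₗ[ℝ] (Fin n → ℝ))
      = (A (U^2) : (Fin n → ℝ) →ₗ[ℝ] (Fin n → ℝ)) ∘ₗ E := by
    apply LinearMap.ext; intro v
    have := hkey (1 + X) v
    rw [e1, e2] at this
    exact this
  refine ⟨LinearMap.toMatrix' E, LinearMap.toMatrix' (Eeq.symm : (Fin n → ℝ) →ₗ[ℝ] (Fin n → ℝ)),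
    ?_, ?_, ?_⟩
  · rw [← LinearMap.toMatrix'_comp, hid1, LinearMap.toMatrix'_id]
  · rw [← LinearMap.toMatrix'_comp, hid2, LinearMap.toMatrix'_id]
  · have := congrArg LinearMap.toMatrix' hcomp
    rw [LinearMap.toMatrix'_comp E ((A U : (Fin n → ℝ) →ₗ[ℝ] (Fin n → ℝ))),
      LinearMap.toMatrix'_comp ((A (U^2) : (Fin n → ℝ) →ₗ[ℝ] (Fin n → ℝ))) E, hAM, hAM] at this
    exact this

end LengthAux

end LengthAux

/-- Any length function on `SL_n(ℝ)` (`n ≥ 2`) vanishes on unipotent elements. -/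
theorem length_function_SL_vanishes_on_unipotent {n : ℕ} (hn : 2 ≤ n)
    (l : Matrix.SpecialLinearGroup (Fin n) ℝ → ℝ)
    (hnonneg : ∀ g, 0 ≤ l g)
    (hpow : ∀ (g : Matrix.SpecialLinearGroup (Fin n) ℝ) (k : ℤ),
      l (g ^ k) = |(k : ℝ)| * l g)
    (hconj : ∀ a g : Matrix.SpecialLinearGroup (Fin n) ℝ, l (a * g * a⁻¹) = l g)
    (hcomm : ∀ a b : Matrix.SpecialLinearGroup (Fin n) ℝ,
      a * b = b * a → l (a * b) ≤ l a + l b)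
    (u : Matrix.SpecialLinearGroup (Fin n) ℝ)
    (hu : IsNilpotent ((u : Matrix (Fin n) (Fin n) ℝ) - 1)) :
    l u = 0 := by
  obtain ⟨P, Pinv, h1, h2, hPU⟩ := LengthAux.exists_conj (u : Matrix (Fin n) (Fin n) ℝ) hu
  set U : Matrix (Fin n) (Fin n) ℝ := (u : Matrix (Fin n) (Fin n) ℝ) with hUdef
  -- P² conjugates U to U⁴ and has positive determinant
  have h3 : P * U ^ 2 = U ^ 4 * P := by
    calc P * U ^ 2 = (P * U) * U := by rw [pow_two, ← mul_assoc]
      _ = (U ^ 2 * P) * U := by rw [hPU]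
      _ = U ^ 2 * (P * U) := by rw [mul_assoc]
      _ = U ^ 2 * (U ^ 2 * P) := by rw [hPU]
      _ = U ^ 4 * P := by rw [← mul_assoc, ← pow_add]
  have h4 : (P * P) * U = U ^ 4 * (P * P) := by
    calc (P * P) * U = P * (P * U) := by rw [mul_assoc]
      _ = P * (U ^ 2 * P) := by rw [hPU]
      _ = (P * U ^ 2) * P := by rw [← mul_assoc]
      _ = (U ^ 4 * P) * P := by rw [h3]
      _ = U ^ 4 * (P * P) := by rw [mul_assoc]
  have hdetP : P.det ≠ 0 := by
    intro h
    have := congrArg Matrix.det h1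
    rw [Matrix.det_mul, Matrix.det_one, h, zero_mul] at this
    exact zero_ne_one this
  have hdet2 : 0 < (P * P).det := by
    rw [Matrix.det_mul]
    exact mul_self_pos.mpr hdetP
  set c : ℝ := ((P * P).det) ^ (-(1/(n:ℝ)) : ℝ) with hc
  have hcpos : 0 < c := Real.rpow_pos_of_pos hdet2 _
  have hn0 : (n : ℝ) ≠ 0 := by
    have : (0:ℕ) < n := lt_of_lt_of_le (by norm_num) hn
    exact_mod_cast this.ne'
  have hdetG : (c • (P * P)).det = 1 := by
    rw [Matrix.det_smul]
    have : c ^ (Fintype.card (Fin n)) = ((P * P).det)⁻¹ := by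
      rw [Fintype.card_fin, hc, ← Real.rpow_natCast (((P * P).det) ^ (-(1/(n:ℝ)) : ℝ)) n,
        ← Real.rpow_mul hdet2.le]
      have : (-(1/(n:ℝ))) * (n:ℝ) = -1 := by field_simp
      rw [this, Real.rpow_neg_one]
    rw [this, inv_mul_cancel₀ hdet2.ne']
  set g : Matrix.SpecialLinearGroup (Fin n) ℝ := ⟨c • (P * P), hdetG⟩ with hg
  have hgu : g * u = u ^ 4 * g := by
    apply Subtype.ext
    show (c • (P * P)) * U = ((u ^ 4 : Matrix.SpecialLinearGroup (Fin n) ℝ) :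
      Matrix (Fin n) (Fin n) ℝ) * (c • (P * P))
    have hcoe : ((u ^ 4 : Matrix.SpecialLinearGroup (Fin n) ℝ) :
        Matrix (Fin n) (Fin n) ℝ) = U ^ 4 := by
      simp [hUdef]
    rw [hcoe, Matrix.smul_mul, Matrix.mul_smul, h4]
  have hconj4 : g * u * g⁻¹ = u ^ 4 := by
    rw [hgu, mul_inv_cancel_right]
  have h5 : l (u ^ 4) = l u := by rw [← hconj4, hconj]
  have h6 : l (u ^ (4:ℤ)) = |((4:ℤ) : ℝ)| * l u := hpow u 4
  have h7 : u ^ ((4:ℕ) : ℤ) = u ^ (4:ℕ) := zpow_natCast u 4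
  have h8 : (4:ℝ) * l u = l u := by
    have : l (u ^ (4:ℕ)) = |((4:ℤ):ℝ)| * l u := by
      rw [← h7]
      exact_mod_cast h6
    rw [h5] at this
    norm_num at this
    linarith [this]
  linarith
end
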